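/- For 2k ≤ n, the dimension of End_{S_n}(Sym^k(ℂⁿ)) is strictly less than the dimension of End_{S_n}((ℂⁿ)^{⊗k}), for all k ≥ 2. -/
import Mathlib


/-- Model of the symmetric power `Sym^k(ℂⁿ)`: the free ℂ-module on the basis
indexed by length-`k` partitions with entries in `{1,…,n}`, i.e. size-`k`
multisets from an `n`-element set (basis vector `v_λ = Pi.single λ 1`). -/
abbrev SymV (n k : ℕ) : Type := Sym (Fin n) k → ℂ

/-- The diagonal action of a permutation matrix `σ ∈ S_n ⊆ GL_n(ℂ)` on `Sym^k(ℂⁿ)`: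
the linear map sending the basis vector `v_λ` to `v_{σλ}`, where `σλ` is obtained by
applying `σ` entrywise (and sorting). -/
noncomputable def permAct (n k : ℕ) (σ : Equiv.Perm (Fin n)) : Module.End ℂ (SymV n k) :=
  LinearMap.funLeft ℂ ℂ (Sym.map ⇑σ⁻¹)

/-- The centralizer algebra `End_{S_n}(Sym^k(ℂⁿ))`. -/
noncomputable def centAlg (n k : ℕ) : Subalgebra ℂ (Module.End ℂ (SymV n k)) :=
  Subalgebra.centralizer ℂ (Set.range (permAct n k))

/-- Model of the tensor power `(ℂⁿ)^{⊗k}`: the free ℂ-module on the basis indexed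
by `k`-tuples of indices in `{1,…,n}`. -/
abbrev TenV (n k : ℕ) : Type := (Fin k → Fin n) → ℂ

/-- The diagonal action of `σ ∈ S_n` on `(ℂⁿ)^{⊗k}`: the linear map sending the
basis vector indexed by `f` to the one indexed by `σ ∘ f`. -/
noncomputable def tenAct (n k : ℕ) (σ : Equiv.Perm (Fin n)) : Module.End ℂ (TenV n k) :=
  LinearMap.funLeft ℂ ℂ (fun f => ⇑σ⁻¹ ∘ f)

/-- The centralizer algebra `End_{S_n}((ℂⁿ)^{⊗k})` (for `2k ≤ n`, the partition
algebra of order `k`). -/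
noncomputable def centAlgTen (n k : ℕ) : Subalgebra ℂ (Module.End ℂ (TenV n k)) :=
  Subalgebra.centralizer ℂ (Set.range (tenAct n k))

namespace PfAux
open Finset
variable {n k : ℕ}

noncomputable def pmk (w : Fin k → Fin n) : Sym (Fin n) k :=
  ⟨Multiset.map w Finset.univ.val, by simp⟩

lemma pmk_comp (c : Fin n → Fin n) (w : Fin k → Fin n) :
    pmk (c ∘ w) = Sym.map c (pmk w) := by
  apply Subtype.ext
  show Multiset.map (c ∘ w) Finset.univ.val = Multiset.map c (Multiset.map w Finset.univ.val)
  rw [Multiset.map_map]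

lemma pmk_surjective : Function.Surjective (pmk (n := n) (k := k)) := by
  rintro ⟨s, hs⟩
  induction s using Quotient.inductionOn with
  | h l =>
    simp only [Multiset.quot_mk_to_coe, Multiset.coe_card] at hs
    subst hs
    refine ⟨l.get, Subtype.ext ?_⟩
    show Multiset.map l.get Finset.univ.val = (l : Multiset (Fin n))
    simp [Fin.univ_def, ← List.ofFn_eq_map, List.ofFn_get]

noncomputable def fib (lam : Sym (Fin n) k) : Finset (Fin k → Fin n) :=
  Finset.univ.filter (fun w => pmk w = lam)

lemma mem_fib {lam : Sym (Fin n) k} {w : Fin k → Fin n} :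
    w ∈ fib lam ↔ pmk w = lam := by simp [fib]

lemma fib_nonempty (lam : Sym (Fin n) k) : (fib lam).Nonempty := by
  obtain ⟨w, hw⟩ := pmk_surjective lam
  exact ⟨w, mem_fib.2 hw⟩

/-- composition with a permutation, as an equivalence on tuples -/
def compE (σ : Equiv.Perm (Fin n)) : (Fin k → Fin n) ≃ (Fin k → Fin n) :=
  Equiv.arrowCongr (Equiv.refl (Fin k)) σ

lemma compE_apply (σ : Equiv.Perm (Fin n)) (w : Fin k → Fin n) :
    compE σ w = ⇑σ ∘ w := rfl

lemma fib_map (σ : Equiv.Perm (Fin n)) (lam : Sym (Fin n) k) :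
    fib (Sym.map ⇑σ lam) = (fib lam).map (compE σ).toEmbedding := by
  ext w'
  simp only [Finset.mem_map, mem_fib, Equiv.coe_toEmbedding]
  constructor
  · intro hw'
    refine ⟨⇑σ⁻¹ ∘ w', ?_, ?_⟩
    · apply Sym.map_injective σ.injective
      rw [← pmk_comp]
      have h2 : ⇑σ ∘ ⇑σ⁻¹ ∘ w' = w' := by funext i; simp
      rw [h2, hw']
    · rw [compE_apply]; funext i; simp
  · rintro ⟨w, hw, rfl⟩
    rw [compE_apply, pmk_comp, hw]

noncomputable def sL : SymV n k →ₗ[ℂ] TenV n k := LinearMap.funLeft ℂ ℂ pmk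

lemma sL_apply (g : SymV n k) (w : Fin k → Fin n) : sL g w = g (pmk w) := rfl

lemma sL_inj : Function.Injective (sL (n := n) (k := k)) := by
  intro g g' hgg
  funext lam
  obtain ⟨w, hw⟩ := pmk_surjective lam
  have := congrFun hgg w
  rwa [sL_apply, sL_apply, hw] at this

noncomputable def pL : TenV n k →ₗ[ℂ] SymV n k where
  toFun f := fun lam => (((fib lam).card : ℂ))⁻¹ * ∑ w ∈ fib lam, f w
  map_add' f g := by funext lam; simp [Finset.sum_add_distrib, mul_add]
  map_smul' c f := by
    funext lam
    simp only [Finset.mul_sum, RingHom.id_apply, Pi.smul_apply, smul_eq_mul]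
    exact Finset.sum_congr rfl fun x _ => by ring

lemma pL_apply (f : TenV n k) (lam : Sym (Fin n) k) :
    pL f lam = (((fib lam).card : ℂ))⁻¹ * ∑ w ∈ fib lam, f w := rfl

lemma card_fib_ne_zero (lam : Sym (Fin n) k) : (((fib lam).card : ℂ)) ≠ 0 := by
  exact_mod_cast Finset.card_ne_zero_of_mem (fib_nonempty lam).choose_spec

lemma pL_sL (g : SymV n k) : pL (sL g) = g := by
  funext lam
  rw [pL_apply]
  have hs : ∑ w ∈ fib lam, sL g w = ((fib lam).card : ℂ) * g lam := by
    rw [Finset.sum_congr rfl (fun w hw => by rw [sL_apply, mem_fib.1 hw])]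
    simp [Finset.sum_const, mul_comm]
  rw [hs, ← mul_assoc, inv_mul_cancel₀ (card_fib_ne_zero lam), one_mul]

lemma sL_perm (σ : Equiv.Perm (Fin n)) (g : SymV n k) :
    tenAct n k σ (sL g) = sL (permAct n k σ g) := by
  funext w
  show g (pmk (⇑σ⁻¹ ∘ w)) = g (Sym.map ⇑σ⁻¹ (pmk w))
  rw [pmk_comp]

lemma pL_ten (σ : Equiv.Perm (Fin n)) (f : TenV n k) :
    pL (tenAct n k σ f) = permAct n k σ (pL f) := by
  funext lam
  show pL (tenAct n k σ f) lam = pL f (Sym.map ⇑σ⁻¹ lam)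
  rw [pL_apply, pL_apply, fib_map σ⁻¹ lam, Finset.card_map, Finset.sum_map]
  congr 1

noncomputable def Phi : Module.End ℂ (SymV n k) →ₗ[ℂ] Module.End ℂ (TenV n k) where
  toFun e := sL ∘ₗ e ∘ₗ pL
  map_add' e e' := by simp [LinearMap.add_comp, LinearMap.comp_add]
  map_smul' c e := by simp [LinearMap.smul_comp, LinearMap.comp_smul]

lemma Phi_apply (e : Module.End ℂ (SymV n k)) (f : TenV n k) :
    Phi e f = sL (e (pL f)) := rfl

lemma Phi_inj : Function.Injective (Phi (n := n) (k := k)) := by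
  intro e e' hee
  apply LinearMap.ext
  intro g
  have h := DFunLike.congr_fun hee (sL g)
  rw [Phi_apply, Phi_apply, pL_sL] at h
  exact sL_inj h

noncomputable def TT : Module.End ℂ (TenV n k) where
  toFun f := fun w => if Function.Injective w then f w else 0
  map_add' f g := by
    funext w
    by_cases h : Function.Injective w <;> simp [h]
  map_smul' c f := by
    funext w
    by_cases h : Function.Injective w <;> simp [h]

lemma TT_apply (f : TenV n k) (w : Fin k → Fin n) :
    TT f w = if Function.Injective w then f w else 0 := rfl

lemma TT_mem : TT ∈ centAlgTen n k := by
  rw [centAlgTen, Subalgebra.mem_centralizer_iff]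
  rintro g ⟨σ, rfl⟩
  apply LinearMap.ext
  intro f
  funext w
  show TT f (⇑σ⁻¹ ∘ w) = TT (tenAct n k σ f) w
  rw [TT_apply, TT_apply]
  have hiff : Function.Injective (⇑σ⁻¹ ∘ w) ↔ Function.Injective w :=
    Equiv.comp_injective w σ⁻¹
  by_cases h : Function.Injective w
  · rw [if_pos (hiff.2 h), if_pos h]; rfl
  · rw [if_neg (fun h' => h (hiff.1 h')), if_neg h]

lemma Phi_mem_cent {e : Module.End ℂ (SymV n k)} (he : e ∈ centAlg n k) :
    Phi e ∈ centAlgTen n k := by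
  rw [centAlg, Subalgebra.mem_centralizer_iff] at he
  rw [centAlgTen, Subalgebra.mem_centralizer_iff]
  rintro g ⟨σ, rfl⟩
  have hcomm : ∀ x, permAct n k σ (e x) = e (permAct n k σ x) := by
    intro x
    exact DFunLike.congr_fun (he (permAct n k σ) ⟨σ, rfl⟩) x
  apply LinearMap.ext
  intro f
  show tenAct n k σ (Phi e f) = Phi e (tenAct n k σ f)
  rw [Phi_apply, Phi_apply, sL_perm, hcomm, pL_ten]

lemma TT_not_range (hk : 2 ≤ k) (hkn : k ≤ n) :
    (TT : Module.End ℂ (TenV n k)) ∉ Set.range Phi := by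
  rintro ⟨e, he⟩
  set w₀ : Fin k → Fin n := Fin.castLE hkn with hw₀def
  have hw0 : Function.Injective w₀ := Fin.castLE_injective hkn
  set i0 : Fin k := ⟨0, by omega⟩
  set i1 : Fin k := ⟨1, by omega⟩
  have hi : i0 ≠ i1 := by simp [i0, i1, Fin.ext_iff]
  set τ : Equiv.Perm (Fin k) := Equiv.swap i0 i1
  set w₁ : Fin k → Fin n := w₀ ∘ ⇑τ with hw₁def
  have hpm : pmk w₁ = pmk w₀ := by
    apply Subtype.ext
    show Multiset.map (w₀ ∘ ⇑τ) Finset.univ.val = Multiset.map w₀ Finset.univ.val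
    rw [← Multiset.map_map]
    congr 1
    have h1 : (Finset.univ.map τ.toEmbedding) = Finset.univ := Finset.map_univ_equiv τ
    calc Multiset.map (⇑τ) Finset.univ.val = (Finset.univ.map τ.toEmbedding).val := rfl
      _ = Finset.univ.val := by rw [h1]
  have hne : w₁ ≠ w₀ := by
    intro hEq
    have h2 : w₀ (τ i0) = w₀ i0 := congrFun hEq i0
    have h3 : τ i0 = i0 := hw0 h2
    rw [Equiv.swap_apply_left] at h3
    exact hi h3.symm
  set δ : TenV n k := Pi.single w₀ 1 with hδ
  have hA : Phi e δ w₀ = Phi e δ w₁ := by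
    rw [Phi_apply, sL_apply, sL_apply, hpm]
  rw [he] at hA
  have hT0 : TT δ w₀ = 1 := by
    rw [TT_apply, if_pos hw0, hδ, Pi.single_eq_same]
  have hT1 : TT δ w₁ = 0 := by
    rw [TT_apply, hδ]
    by_cases h : Function.Injective w₁
    · rw [if_pos h, Pi.single_eq_of_ne hne]
    · rw [if_neg h]
  rw [hT0, hT1] at hA
  exact one_ne_zero hA

end PfAux

set_option synthInstance.maxHeartbeats 1000000 in
set_option maxHeartbeats 1000000 in
/-- For `k ≥ 2` and `2k ≤ n`, the dimension of `End_{S_n}(Sym^k(ℂⁿ))` is strictly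
less than that of `End_{S_n}((ℂⁿ)^{⊗k})`. -/
theorem finrank_centAlg_lt_finrank_centAlgTen (n k : ℕ) (hk : 2 ≤ k) (h : 2 * k ≤ n) :
    Module.finrank ℂ (centAlg n k) < Module.finrank ℂ (centAlgTen n k) := by
  classical
  have hkn : k ≤ n := by omega
  set S : Submodule ℂ (Module.End ℂ (SymV n k)) := Subalgebra.toSubmodule (centAlg n k) with hS
  set Tm : Submodule ℂ (Module.End ℂ (TenV n k)) :=
    Subalgebra.toSubmodule (centAlgTen n k) with hTm
  set M : Submodule ℂ (Module.End ℂ (TenV n k)) := S.map PfAux.Phi with hM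
  have hle : M ≤ Tm := by
    rintro x ⟨e, he, rfl⟩
    exact PfAux.Phi_mem_cent he
  have hTin : PfAux.TT ∈ Tm := PfAux.TT_mem
  have hTnot : PfAux.TT ∉ M := by
    rintro ⟨e, -, hEq⟩
    exact PfAux.TT_not_range hk hkn ⟨e, hEq⟩
  have hlt : M < Tm := lt_of_le_of_ne hle (fun hEq => hTnot (hEq ▸ hTin))
  have h1 : Module.finrank ℂ S = Module.finrank ℂ M :=
    (Submodule.equivMapOfInjective PfAux.Phi PfAux.Phi_inj S).finrank_eq
  have h2 : Module.finrank ℂ M < Module.finrank ℂ Tm :=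
    Submodule.finrank_lt_finrank_of_lt hlt
  have e1 : Module.finrank ℂ (centAlg n k) = Module.finrank ℂ S := rfl
  have e2 : Module.finrank ℂ (centAlgTen n k) = Module.finrank ℂ Tm := rfl
  omega
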